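/- Let f : ℝ₊ⁿ \ {0} → ℝ be continuous with f(x) > 0 for |x| > 0, and suppose lim_{|x|→∞} f(x)/|x| = b where b ∈ ℝ. Define f̂(θ) = max{ f(u) : u ∈ ℝ₊ⁿ, 1 ≤ |u| ≤ θ }. Then lim_{θ→∞} f̂(θ)/θ = b. -/

import Mathlib

open Filter

theorem stmt_9 (n : ℕ) (f : (Fin n → ℝ) → ℝ) (b : ℝ)
    (hfc : ContinuousOn f {x | (∀ i, 0 ≤ x i) ∧ x ≠ 0})
    (hfp : ∀ x : Fin n → ℝ, (∀ i, 0 ≤ x i) → 0 < ∑ i, |x i| → 0 < f x)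
    (hlim : ∀ ε : ℝ, 0 < ε → ∃ R : ℝ, ∀ x : Fin n → ℝ, (∀ i, 0 ≤ x i) → R < ∑ i, |x i| →
      |f x / (∑ i, |x i|) - b| < ε)
    (fhat : ℝ → ℝ)
    (hfhat : ∀ θ : ℝ, 1 ≤ θ →
      IsGreatest {y | ∃ u : Fin n → ℝ, (∀ i, 0 ≤ u i) ∧ 1 ≤ ∑ i, |u i| ∧ ∑ i, |u i| ≤ θ ∧ f u = y}
        (fhat θ)) :
    Tendsto (fun θ => fhat θ / θ) atTop (nhds b) := by
  rcases Nat.eq_zero_or_pos n with hn | hn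
  · exfalso
    obtain ⟨⟨u, _, hu1, _, _⟩, _⟩ := hfhat 1 le_rfl
    subst hn
    simp at hu1
    linarith
  have i0 : Fin n := ⟨0, hn⟩
  set e : ℝ → (Fin n → ℝ) := fun t i => if i = i0 then t else 0 with he
  have he0 : ∀ t : ℝ, 0 ≤ t → ∀ i, 0 ≤ e t i := by
    intro t ht i; simp only [he]; split <;> simp [ht]
  have hes : ∀ t : ℝ, 0 ≤ t → ∑ i, |e t i| = t := by
    intro t ht
    simp only [he, apply_ite abs, abs_zero, abs_of_nonneg ht]
    simp
  rw [Metric.tendsto_atTop]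
  intro ε hε
  obtain ⟨R, hR⟩ := hlim (ε / 2) (by positivity)
  set R' : ℝ := max R 1 with hR'
  have hR'1 : (1 : ℝ) ≤ R' := le_max_right R 1
  set M : ℝ := fhat R' with hM
  have hMpos : 0 < M := by
    obtain ⟨⟨u, hu0, hu1, hu2, hfu⟩, _⟩ := hfhat R' hR'1
    have h := hfp u hu0 (lt_of_lt_of_le one_pos hu1)
    rw [hM, ← hfu]; exact h
  refine ⟨max (R' + 1) (2 * M / ε + 1), fun θ hθ => ?_⟩
  have hθR' : R' + 1 ≤ θ := le_trans (le_max_left _ _) hθ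
  have hθ1 : (1 : ℝ) ≤ θ := by linarith
  have hθpos : (0 : ℝ) < θ := by linarith
  have hθR : R < θ := by
    have : R ≤ R' := le_max_left R 1
    linarith
  have hθM : 2 * M / ε < θ := by
    have : 2 * M / ε + 1 ≤ θ := le_trans (le_max_right _ _) hθ
    linarith
  -- lower bound via the point e θ
  have hxs : ∑ i, |e θ i| = θ := hes θ hθpos.le
  have hxR : |f (e θ) / θ - b| < ε / 2 := by
    have := hR (e θ) (he0 θ hθpos.le) (by rw [hxs]; exact hθR)
    rwa [hxs] at this
  have hfxpos : 0 < f (e θ) := hfp (e θ) (he0 θ hθpos.le) (by rw [hxs]; exact hθpos)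
  have hfx_le : f (e θ) ≤ fhat θ :=
    (hfhat θ hθ1).2 ⟨e θ, he0 θ hθpos.le, by rw [hxs]; exact hθ1, hxs.le, rfl⟩
  have hlow : b - fhat θ / θ < ε := by
    have h1 : b - f (e θ) / θ < ε / 2 := (abs_sub_lt_iff.mp hxR).2
    have h2 : f (e θ) / θ ≤ fhat θ / θ := by
      exact div_le_div_of_nonneg_right hfx_le hθpos.le |>.trans_eq rfl
    linarith
  have hbneg : -(ε / 2) < b := by
    have h1 : f (e θ) / θ - b < ε / 2 := (abs_sub_lt_iff.mp hxR).1
    have h2 : 0 < f (e θ) / θ := div_pos hfxpos hθpos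
    linarith
  -- upper bound
  have hup : fhat θ / θ - b < ε := by
    obtain ⟨⟨u, hu0, hu1, hu2, hfu⟩, _⟩ := hfhat θ hθ1
    have hfupos : 0 < f u := hfp u hu0 (lt_of_lt_of_le one_pos hu1)
    have hspos : (0 : ℝ) < ∑ i, |u i| := lt_of_lt_of_le one_pos hu1
    rcases le_or_gt (∑ i, |u i|) R' with hs | hs
    · have hfuM : f u ≤ M := (hfhat R' hR'1).2 ⟨u, hu0, hu1, hs, rfl⟩
      have h1 : fhat θ / θ ≤ M / θ := by
        rw [← hfu]
        exact div_le_div_of_nonneg_right hfuM hθpos.le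
      have h2 : M / θ < ε / 2 := by
        rw [div_lt_iff₀ hθpos]
        rw [div_lt_iff₀ hε] at hθM
        linarith
      linarith
    · have hRs : R < ∑ i, |u i| := lt_of_le_of_lt (le_max_left R 1) hs
      have habs := hR u hu0 hRs
      have h1 : f u / (∑ i, |u i|) - b < ε / 2 := (abs_sub_lt_iff.mp habs).1
      have h2 : f u < (b + ε / 2) * (∑ i, |u i|) := by
        rw [div_sub' hspos.ne', div_lt_iff₀ hspos] at h1
        nlinarith
      have hbpos : 0 < b + ε / 2 := by
        have : 0 < f u / (∑ i, |u i|) := div_pos hfupos hspos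
        nlinarith
      have h3 : f u ≤ (b + ε / 2) * θ := by
        have := mul_le_mul_of_nonneg_left hu2 hbpos.le
        linarith
      have h4 : fhat θ / θ ≤ b + ε / 2 := by
        rw [← hfu, div_le_iff₀ hθpos]
        linarith
      linarith
  rw [Real.dist_eq, abs_sub_lt_iff]
  exact ⟨hup, hlow⟩
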